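/- arXiv:2005.03554 — 4 statements merged into one kernel-verified Lean document; each statement's English description precedes it below -/
import Mathlib

section
/- For every real p₁ > 1, p₂ > 0, and every constant A > 0, the function χ(x) = (1 + A(1 - ((p₁-1)/p₁)x))^{p₁} · (1 - A(((1+p₂)/p₂)x - 1))^{p₂}, defined on the interval where the second factor is nonnegative, is strictly decreasing in x on (0, min{1, p₂(1+A)/((1+p₂)A)}), satisfies χ(0) = (1+A)^{p₁+p₂} > 1, and there exists a unique x̂ ∈ (0,1) with χ(x̂) = 1. -/
open Set

/-- The FRM boundary-determining function χ. -/
noncomputable def frmChi (p₁ p₂ A x : ℝ) : ℝ :=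
  (1 + A * (1 - (p₁ - 1) / p₁ * x)) ^ p₁ * (1 - A * ((1 + p₂) / p₂ * x - 1)) ^ p₂

/-- χ is strictly decreasing on (0, min{1, p₂(1+A)/((1+p₂)A)}),
χ(0) = (1+A)^(p₁+p₂) > 1, and there is a unique xh ∈ (0,1) (within the domain where
the second factor is nonnegative) with χ(xh) = 1. -/
theorem stmt_2 (p₁ p₂ A : ℝ) (hp₁ : 1 < p₁) (hp₂ : 0 < p₂) (hA : 0 < A) :
    StrictAntiOn (frmChi p₁ p₂ A) (Ioo 0 (min 1 (p₂ * (1 + A) / ((1 + p₂) * A)))) ∧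
    frmChi p₁ p₂ A 0 = (1 + A) ^ (p₁ + p₂) ∧
    1 < (1 + A) ^ (p₁ + p₂) ∧
    ∃! x : ℝ, x ∈ Ioo (0 : ℝ) 1 ∧ 0 ≤ 1 - A * ((1 + p₂) / p₂ * x - 1) ∧
      frmChi p₁ p₂ A x = 1 := by
  have hp₁0 : (0:ℝ) < p₁ := by linarith
  have hp₁ne : p₁ ≠ 0 := ne_of_gt hp₁0
  have hp₂ne : p₂ ≠ 0 := ne_of_gt hp₂
  have hAne : A ≠ 0 := ne_of_gt hA
  have h1p₂ : (0:ℝ) < 1 + p₂ := by linarith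
  have h1p₂ne : (1:ℝ) + p₂ ≠ 0 := ne_of_gt h1p₂
  set F : ℝ → ℝ := fun x => 1 + A * (1 - (p₁ - 1) / p₁ * x) with hF
  set G : ℝ → ℝ := fun x => 1 - A * ((1 + p₂) / p₂ * x - 1) with hG
  have hchi : ∀ x, frmChi p₁ p₂ A x = F x ^ p₁ * G x ^ p₂ := fun x => rfl
  set X := p₂ * (1 + A) / ((1 + p₂) * A) with hX
  have hXpos : 0 < X := by
    rw [hX]; apply div_pos <;> positivity
  have ha1 : (p₁ - 1) / p₁ < 1 := by rw [div_lt_one hp₁0]; linarith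
  have ha0 : 0 < (p₁ - 1) / p₁ := div_pos (by linarith) hp₁0
  have hb1 : 1 < (1 + p₂) / p₂ := by rw [lt_div_iff₀ hp₂]; linarith
  -- monotonicity of F and G
  have hFanti : ∀ x y : ℝ, x < y → F y < F x := by
    intro x y h
    simp only [hF]
    nlinarith [mul_pos hA (mul_pos ha0 (sub_pos.mpr h))]
  have hGanti : ∀ x y : ℝ, x < y → G y < G x := by
    intro x y h
    have hb0 : 0 < (1 + p₂) / p₂ := by linarith
    simp only [hG]
    nlinarith [mul_pos hA (mul_pos hb0 (sub_pos.mpr h))]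
  have hGX : G X = 0 := by
    simp only [hG, hX]
    field_simp
    ring
  have hGpos : ∀ x : ℝ, x < X → 0 < G x := by
    intro x h
    have := hGanti x X h
    rw [hGX] at this
    exact this
  have hFgtG : ∀ x : ℝ, 0 < x → G x < F x := by
    intro x hx
    have hba : 0 < (1 + p₂) / p₂ - (p₁ - 1) / p₁ := by linarith
    simp only [hF, hG]
    nlinarith [mul_pos hA (mul_pos hba hx)]
  have hF0 : F 0 = 1 + A := by simp [hF]
  have hG0 : G 0 = 1 + A := by simp [hG]
  set t := min 1 X with ht
  have htpos : 0 < t := lt_min one_pos hXpos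
  have htX : t ≤ X := min_le_right _ _
  have ht1 : t ≤ 1 := min_le_left _ _
  -- strict antitonicity
  have hanti : StrictAntiOn (frmChi p₁ p₂ A) (Ioo 0 t) := by
    intro x hx y hy hxy
    have hGy : 0 < G y := hGpos y (lt_of_lt_of_le hy.2 htX)
    have hGx : 0 < G x := hGpos x (lt_of_lt_of_le hx.2 htX)
    have hFy : 0 < F y := lt_trans hGy (hFgtG y (lt_trans hx.1 hxy))
    have hFx : 0 < F x := lt_trans hGx (hFgtG x hx.1)
    rw [hchi, hchi]
    have h1 : F y ^ p₁ < F x ^ p₁ :=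
      Real.rpow_lt_rpow hFy.le (hFanti x y hxy) hp₁0
    have h2 : G y ^ p₂ ≤ G x ^ p₂ :=
      Real.rpow_le_rpow hGy.le (hGanti x y hxy).le hp₂.le
    exact mul_lt_mul h1 h2 (Real.rpow_pos_of_pos hGy p₂) (Real.rpow_nonneg hFx.le p₁)
  -- value at 0
  have h1A : (0:ℝ) < 1 + A := by linarith
  have hchi0 : frmChi p₁ p₂ A 0 = (1 + A) ^ (p₁ + p₂) := by
    rw [hchi, hF0, hG0, ← Real.rpow_add h1A]
  have hgt1 : 1 < (1 + A) ^ (p₁ + p₂) := by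
    rw [Real.one_lt_rpow_iff_of_pos h1A]
    left
    exact ⟨by linarith, by linarith⟩
  -- fun_prop
  have hcF : Continuous F := by
    simp only [hF]; fun_prop
  have hcG : Continuous G := by
    simp only [hG]; fun_prop
  have hcont : Continuous (frmChi p₁ p₂ A) := by
    have : frmChi p₁ p₂ A = fun x => F x ^ p₁ * G x ^ p₂ := funext hchi
    rw [this]
    exact (hcF.rpow_const fun x => Or.inr hp₁0.le).mul
      (hcG.rpow_const fun x => Or.inr hp₂.le)
  -- value at t is < 1
  have hchit : frmChi p₁ p₂ A t < 1 := by
    rcases le_or_gt X 1 with hX1 | h1X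
    · have htX' : t = X := min_eq_right hX1
      rw [htX', hchi, hGX, Real.zero_rpow hp₂ne, mul_zero]
      exact one_pos
    · have ht1' : t = 1 := min_eq_left h1X.le
      rw [ht1']
      have hG1 : 0 < G 1 := hGpos 1 h1X
      have hF1 : 0 < F 1 := lt_trans hG1 (hFgtG 1 one_pos)
      have hχpos : 0 < frmChi p₁ p₂ A 1 := by
        rw [hchi]
        exact mul_pos (Real.rpow_pos_of_pos hF1 p₁) (Real.rpow_pos_of_pos hG1 p₂)
      rw [← Real.log_neg_iff hχpos]
      rw [hchi, Real.log_mul (ne_of_gt (Real.rpow_pos_of_pos hF1 p₁))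
        (ne_of_gt (Real.rpow_pos_of_pos hG1 p₂)),
        Real.log_rpow hF1, Real.log_rpow hG1]
      have hF1ne : F 1 ≠ 1 := by
        have : 0 < A * (1 - (p₁ - 1) / p₁) := by nlinarith
        simp only [hF]
        intro h
        nlinarith
      have hG1ne : G 1 ≠ 1 := by
        have : 0 < A * ((1 + p₂) / p₂ - 1) := by nlinarith
        simp only [hG]
        intro h
        nlinarith
      have l1 : Real.log (F 1) < F 1 - 1 := Real.log_lt_sub_one_of_pos hF1 hF1ne
      have l2 : Real.log (G 1) < G 1 - 1 := Real.log_lt_sub_one_of_pos hG1 hG1ne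
      have e1 : p₁ * (F 1 - 1) = A := by
        simp only [hF]; field_simp; ring
      have e2 : p₂ * (G 1 - 1) = -A := by
        simp only [hG]; field_simp; ring
      have m1 : p₁ * Real.log (F 1) < p₁ * (F 1 - 1) := by
        exact mul_lt_mul_of_pos_left l1 hp₁0
      have m2 : p₂ * Real.log (G 1) < p₂ * (G 1 - 1) := by
        exact mul_lt_mul_of_pos_left l2 hp₂
      linarith
  -- existence via IVT
  have hIVT := intermediate_value_Ioo' htpos.le hcont.continuousOn
  have hmem : (1:ℝ) ∈ Ioo (frmChi p₁ p₂ A t) (frmChi p₁ p₂ A 0) := by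
    constructor
    · exact hchit
    · rw [hchi0]; exact hgt1
  obtain ⟨xh, hxhmem, hxhval⟩ := hIVT hmem
  refine ⟨hanti, hchi0, hgt1, ?_⟩
  have hxhX : xh < X := lt_of_lt_of_le hxhmem.2 htX
  have hxh1 : xh < 1 := lt_of_lt_of_le hxhmem.2 ht1
  refine ⟨xh, ⟨⟨hxhmem.1, hxh1⟩, (hGpos xh hxhX).le, hxhval⟩, ?_⟩
  rintro y ⟨hy01, hyG, hyχ⟩
  -- G y > 0 (else χ y = 0 ≠ 1)
  have hGy : 0 < G y := by
    rcases lt_or_eq_of_le hyG with h | h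
    · exact h
    · exfalso
      have hGy0 : G y = 0 := h.symm
      have : frmChi p₁ p₂ A y = 0 := by
        rw [hchi, hGy0, Real.zero_rpow hp₂ne, mul_zero]
      rw [hyχ] at this
      norm_num at this
  have hyX : y < X := by
    by_contra h
    push_neg at h
    rcases eq_or_lt_of_le h with h' | h'
    · rw [← h', hGX] at hGy; exact lt_irrefl 0 hGy
    · have := hGanti X y h'
      rw [hGX] at this
      linarith
  have hymem : y ∈ Ioo 0 t := ⟨hy01.1, lt_min hy01.2 hyX⟩
  exact hanti.injOn hymem hxhmem (hyχ.trans hxhval.symm)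
end

section
/- Let p₂ > 0, B₀ > 0, 0 < r < m, and β > B₀(m/r - 1). Define g̃(υ) = (1+p₂)·𝔲^{1/(1+p₂)}·υ^{p₂/(1+p₂)} - (1 + p₂υ) for υ ∈ (0,1), where 𝔲 = β/(B₀(m/r-1)) > 1. Then g̃ is strictly increasing on (0,1), g̃(υ) → -1 < 0 as υ → 0⁺, and g̃(1) > 0; consequently there exists a unique υ* ∈ (0,1) with g̃(υ*) = 0. -/
open Set Filter

/-- With 𝔲 = β/(B₀(m/r-1)) > 1, the function
g̃(υ) = (1+p₂)𝔲^{1/(1+p₂)}υ^{p₂/(1+p₂)} - (1 + p₂υ) is strictly increasing on (0,1),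
tends to -1 as υ → 0⁺, is positive at 1, and has a unique zero υ* ∈ (0,1). -/
theorem stmt_7 (p₂ B₀ r m β : ℝ) (hp₂ : 0 < p₂) (hB₀ : 0 < B₀) (hr : 0 < r)
    (hm : r < m) (hβ : B₀ * (m / r - 1) < β) :
    let 𝔲 : ℝ := β / (B₀ * (m / r - 1))
    let g : ℝ → ℝ := fun υ =>
      (1 + p₂) * 𝔲 ^ (1 / (1 + p₂)) * υ ^ (p₂ / (1 + p₂)) - (1 + p₂ * υ)
    1 < 𝔲 ∧
    StrictMonoOn g (Ioo 0 1) ∧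
    Tendsto g (nhdsWithin 0 (Ioi 0)) (nhds (-1)) ∧
    (-1 : ℝ) < 0 ∧
    0 < g 1 ∧
    ∃! υ : ℝ, υ ∈ Ioo (0 : ℝ) 1 ∧ g υ = 0 := by
  intro 𝔲 g
  have hden : 0 < B₀ * (m / r - 1) := by
    have h1 : 1 < m / r := (one_lt_div hr).2 hm
    have : 0 < m / r - 1 := by linarith
    exact mul_pos hB₀ this
  have h𝔲 : 1 < 𝔲 := (one_lt_div hden).2 hβ
  have hp1 : (0:ℝ) < 1 + p₂ := by linarith
  set a : ℝ := 1 / (1 + p₂) with ha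
  set b : ℝ := p₂ / (1 + p₂) with hb
  have hapos : 0 < a := by positivity
  have hbpos : 0 < b := by positivity
  have hba : b - 1 = -a := by
    rw [ha, hb]; field_simp; ring
  set C : ℝ := (1 + p₂) * 𝔲 ^ a with hC
  have h𝔲a : 1 < 𝔲 ^ a :=
    (Real.one_lt_rpow_iff_of_pos (by linarith)).2 (Or.inl ⟨h𝔲, hapos⟩)
  have hCpos : 0 < C := by
    have : (0:ℝ) < 𝔲 ^ a := by linarith
    exact mul_pos hp1 this
  have hgdef : g = fun υ => C * υ ^ b - (1 + p₂ * υ) := rfl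
  -- continuity of g
  have hrpow_cont : Continuous fun υ : ℝ => υ ^ b := by
    rw [continuous_iff_continuousAt]
    intro x
    exact Real.continuousAt_rpow_const x b (Or.inr hbpos.le)
  have hg_cont : Continuous g := by
    rw [hgdef]
    exact (continuous_const.mul hrpow_cont).sub
      (continuous_const.add (continuous_const.mul continuous_id))
  -- value at 0
  have hg0 : g 0 = -1 := by
    rw [hgdef]
    simp [Real.zero_rpow (ne_of_gt hbpos)]
  -- value at 1
  have hg1 : g 1 = (1 + p₂) * (𝔲 ^ a - 1) := by
    rw [hgdef]
    simp [Real.one_rpow]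
    ring
  have hg1pos : 0 < g 1 := by
    rw [hg1]
    have : 0 < 𝔲 ^ a - 1 := by linarith
    exact mul_pos hp1 this
  -- derivative
  have hderiv : ∀ x ∈ Ioo (0:ℝ) 1, HasDerivAt g (p₂ * (𝔲 ^ a * x ^ (b - 1) - 1)) x := by
    intro x hx
    have h1 : HasDerivAt (fun y : ℝ => y ^ b) (b * x ^ (b - 1)) x :=
      Real.hasDerivAt_rpow_const (Or.inl (ne_of_gt hx.1))
    have h2 : HasDerivAt (fun y : ℝ => C * y ^ b - (1 + p₂ * y))
        (C * (b * x ^ (b - 1)) - p₂) x := by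
      have h3 : HasDerivAt (fun y : ℝ => 1 + p₂ * y) p₂ x := by
        simpa using ((hasDerivAt_id x).const_mul p₂).const_add 1
      exact (h1.const_mul C).sub h3
    have heq : C * (b * x ^ (b - 1)) - p₂ = p₂ * (𝔲 ^ a * x ^ (b - 1) - 1) := by
      rw [hC, hb]
      field_simp
    rw [hgdef]
    rw [heq] at h2
    exact h2
  have hderiv_pos : ∀ x ∈ Ioo (0:ℝ) 1, 0 < p₂ * (𝔲 ^ a * x ^ (b - 1) - 1) := by
    intro x hx
    have hx1 : 1 < x ^ (b - 1) := by
      rw [hba]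
      exact Real.one_lt_rpow_of_pos_of_lt_one_of_neg hx.1 hx.2 (by linarith)
    have : 1 < 𝔲 ^ a * x ^ (b - 1) := by
      calc (1:ℝ) = 1 * 1 := by ring
      _ < 𝔲 ^ a * x ^ (b - 1) := by
          apply mul_lt_mul' h𝔲a.le hx1 (by norm_num) (by linarith)
    have : 0 < 𝔲 ^ a * x ^ (b - 1) - 1 := by linarith
    exact mul_pos hp₂ this
  have hmono : StrictMonoOn g (Ioo 0 1) := by
    apply strictMonoOn_of_deriv_pos (convex_Ioo 0 1) hg_cont.continuousOn
    intro x hx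
    rw [interior_Ioo] at hx
    rw [(hderiv x hx).deriv]
    exact hderiv_pos x hx
  -- tendsto
  have htend : Tendsto g (nhdsWithin 0 (Ioi 0)) (nhds (-1)) := by
    have := (hg_cont.tendsto 0).mono_left (nhdsWithin_le_nhds (s := Ioi (0:ℝ)))
    rwa [hg0] at this
  refine ⟨h𝔲, hmono, htend, by norm_num, hg1pos, ?_⟩
  -- existence via IVT on Ioo
  have hsub : Ioo (g 0) (g 1) ⊆ g '' Ioo 0 1 :=
    intermediate_value_Ioo (by norm_num) hg_cont.continuousOn
  have h0mem : (0:ℝ) ∈ Ioo (g 0) (g 1) := by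
    rw [hg0]; exact ⟨by norm_num, hg1pos⟩
  obtain ⟨υ, hυmem, hυeq⟩ := hsub h0mem
  refine ⟨υ, ⟨hυmem, hυeq⟩, ?_⟩
  rintro y ⟨hymem, hyeq⟩
  exact hmono.injOn hymem hυmem (by rw [hyeq, hυeq])
end

section
/- Let p₁ > 1, p₂ > 0 satisfy ((1+p₂)/p₂)·((p₁-1)/p₁) = δ/r with r, δ > 0 and r < m ≤ δ. Then (p₁/m) - (p₁-1)/δ - p₂(1/r - 1/m) = (p₁+p₂)/m - ((p₁-1)/δ)(1 + (1+p₂)/p₁) ≥ (1+p₂)/(p₁δ) > 0. -/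
/-- For r < m ≤ δ,
(p₁/m) - (p₁-1)/δ - p₂(1/r - 1/m) = (p₁+p₂)/m - ((p₁-1)/δ)(1 + (1+p₂)/p₁)
≥ (1+p₂)/(p₁δ) > 0. -/
theorem stmt_10 (p₁ p₂ r δ m : ℝ) (hp₁ : 1 < p₁) (hp₂ : 0 < p₂)
    (hr : 0 < r) (hδ : 0 < δ) (hrm : r < m) (hmδ : m ≤ δ)
    (hid : (1 + p₂) / p₂ * ((p₁ - 1) / p₁) = δ / r) :
    p₁ / m - (p₁ - 1) / δ - p₂ * (1 / r - 1 / m)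
      = (p₁ + p₂) / m - (p₁ - 1) / δ * (1 + (1 + p₂) / p₁) ∧
    (1 + p₂) / (p₁ * δ) ≤ (p₁ + p₂) / m - (p₁ - 1) / δ * (1 + (1 + p₂) / p₁) ∧
    0 < (1 + p₂) / (p₁ * δ) := by
  have hm : 0 < m := lt_trans hr hrm
  have hp₁0 : 0 < p₁ := lt_trans one_pos hp₁
  have hkey : p₂ / r = (1 + p₂) * (p₁ - 1) / (p₁ * δ) := by
    field_simp at hid ⊢
    nlinarith [hid]
  refine ⟨?_, ?_, ?_⟩
  · rw [mul_sub, show p₂ * (1 / r) = p₂ / r by ring, hkey]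
    field_simp
    ring
  · have h1 : (p₁ + p₂) / δ ≤ (p₁ + p₂) / m :=
      div_le_div_of_nonneg_left (by positivity) hm hmδ
    have h2 : (p₁ + p₂) / δ - (p₁ - 1) / δ * (1 + (1 + p₂) / p₁)
        = (1 + p₂) / (p₁ * δ) := by
      field_simp
      ring
    linarith
  · positivity
end

section
/- Let p₁ > 1, p₂ > 0, m > δ > 0, B₀ > 0, α > 0, and h₃ > 1. For h ∈ (1, h₃], if h^{-p₁}(h₃ - h) ≥ (mB₀/(αδ))·((p₁-1)/p₁ - δ/m), then h^{p₁} + (αδ/(mB₀))p₁(h₃ - h) - p₁(1 - δ/m)h ≥ p₁h(1 - δ/m)(h^{p₁-1} - 1) > 0. -/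
open Set

/-- Key inequality in the APRM analysis for m ≥ m*: for h ∈ (1, h₃],
if h^{-p₁}(h₃ - h) ≥ (mB₀/(αδ))((p₁-1)/p₁ - δ/m), then
h^{p₁} + (αδ/(mB₀))p₁(h₃ - h) - p₁(1 - δ/m)h ≥ p₁h(1 - δ/m)(h^{p₁-1} - 1) > 0. -/
theorem stmt_15 (p₁ p₂ m δ B₀ α h₃ h : ℝ) (hp₁ : 1 < p₁) (hp₂ : 0 < p₂)
    (hδ : 0 < δ) (hδm : δ < m) (hB₀ : 0 < B₀) (hα : 0 < α) (hh₃ : 1 < h₃)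
    (hh : h ∈ Ioc (1 : ℝ) h₃)
    (hyp : m * B₀ / (α * δ) * ((p₁ - 1) / p₁ - δ / m) ≤ h ^ (-p₁) * (h₃ - h)) :
    p₁ * h * (1 - δ / m) * (h ^ (p₁ - 1) - 1)
      ≤ h ^ p₁ + α * δ / (m * B₀) * p₁ * (h₃ - h) - p₁ * (1 - δ / m) * h ∧
    0 < p₁ * h * (1 - δ / m) * (h ^ (p₁ - 1) - 1) := by
  obtain ⟨h1, hh3⟩ := hh
  have hpos : (0 : ℝ) < h := lt_trans one_pos h1
  have hm : (0 : ℝ) < m := lt_trans hδ hδm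
  have hA : (0 : ℝ) < h ^ p₁ := Real.rpow_pos_of_pos hpos _
  have hB1 : 1 < h ^ (p₁ - 1) :=
    Real.one_lt_rpow_iff_of_pos hpos |>.mpr (Or.inl ⟨h1, by linarith⟩)
  have hsplit : h ^ p₁ = h * h ^ (p₁ - 1) := by
    rw [← Real.rpow_one_add' (le_of_lt hpos) (by linarith)]
    ring_nf
  have hδm1 : δ / m < 1 := (div_lt_one hm).mpr hδm
  have hc : (0 : ℝ) < α * δ / (m * B₀) := by positivity
  have hneg : h ^ (-p₁) = (h ^ p₁)⁻¹ := Real.rpow_neg (le_of_lt hpos) p₁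
  rw [hneg] at hyp
  -- multiply hyp by h^p₁ > 0
  have key : h ^ p₁ * (m * B₀ / (α * δ)) * ((p₁ - 1) / p₁ - δ / m) ≤ h₃ - h := by
    have := mul_le_mul_of_nonneg_left hyp (le_of_lt hA)
    calc h ^ p₁ * (m * B₀ / (α * δ)) * ((p₁ - 1) / p₁ - δ / m)
        = h ^ p₁ * (m * B₀ / (α * δ) * ((p₁ - 1) / p₁ - δ / m)) := by ring
      _ ≤ h ^ p₁ * ((h ^ p₁)⁻¹ * (h₃ - h)) := this
      _ = h₃ - h := by field_simp
  have hcC : α * δ / (m * B₀) * (m * B₀ / (α * δ)) = 1 := by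
    field_simp
  have key2 : h ^ p₁ * ((p₁ - 1) / p₁ - δ / m) ≤ α * δ / (m * B₀) * (h₃ - h) := by
    have := mul_le_mul_of_nonneg_left key (le_of_lt hc)
    calc h ^ p₁ * ((p₁ - 1) / p₁ - δ / m)
        = (α * δ / (m * B₀) * (m * B₀ / (α * δ))) * (h ^ p₁ * ((p₁ - 1) / p₁ - δ / m)) := by
          rw [hcC]; ring
      _ = α * δ / (m * B₀) * (h ^ p₁ * (m * B₀ / (α * δ)) * ((p₁ - 1) / p₁ - δ / m)) := by ring
      _ ≤ α * δ / (m * B₀) * (h₃ - h) := this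
  have hpK : p₁ * ((p₁ - 1) / p₁ - δ / m) = p₁ - 1 - p₁ * (δ / m) := by
    field_simp
  have key3 : h ^ p₁ * (p₁ - 1 - p₁ * (δ / m)) ≤ p₁ * (α * δ / (m * B₀) * (h₃ - h)) := by
    have := mul_le_mul_of_nonneg_left key2 (le_of_lt (lt_trans one_pos hp₁))
    calc h ^ p₁ * (p₁ - 1 - p₁ * (δ / m)) = h ^ p₁ * (p₁ * ((p₁ - 1) / p₁ - δ / m)) := by
          rw [hpK]
      _ = p₁ * (h ^ p₁ * ((p₁ - 1) / p₁ - δ / m)) := by ring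
      _ ≤ p₁ * (α * δ / (m * B₀) * (h₃ - h)) := this
  have h2 : p₁ * (1 - δ / m) * h ^ p₁ = p₁ * (1 - δ / m) * (h * h ^ (p₁ - 1)) := by
    rw [hsplit]
  constructor
  · nlinarith [key3, h2]
  · have : 0 < 1 - δ / m := by linarith
    have : 0 < h ^ (p₁ - 1) - 1 := by linarith
    positivity
end
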